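/- arXiv:2107.00247 — 3 statements merged into one kernel-verified Lean document; each statement's English description precedes it below -/
import Mathlib

section
/- Let Σ be a symmetric positive definite d×d real matrix, μ ∈ ℝ^d, ε ≥ 0, and z* a minimizer over {z : ‖z‖_∞ ≤ 1} of z ↦ ⟨μ - εz, Σ^{-1}(μ - εz)⟩, with μ - εz* ≠ 0. Define c = 2⟨μ, Σ^{-1}(μ - εz*)⟩ and d = 2·√⟨μ - εz*, Σ^{-1}(μ - εz*)⟩. Then c/d² ≥ 1/2, with equality when ε = 0. -/
open Matrix
theorem c_over_d_sq_ge_half (dd : ℕ) (S : Matrix (Fin dd) (Fin dd) ℝ) (hS : S.PosDef)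
    (μ : Fin dd → ℝ) (ε : ℝ) (hε : 0 ≤ ε) (z : Fin dd → ℝ)
    (hz : ∀ i, |z i| ≤ 1)
    (hmin : ∀ z' : Fin dd → ℝ, (∀ i, |z' i| ≤ 1) →
        ∑ i, (μ i - ε * z i) * S⁻¹.mulVec (fun j => μ j - ε * z j) i
          ≤ ∑ i, (μ i - ε * z' i) * S⁻¹.mulVec (fun j => μ j - ε * z' j) i)
    (hne : (fun j => μ j - ε * z j) ≠ 0)
    (c d : ℝ)
    (hc : c = 2 * ∑ i, μ i * S⁻¹.mulVec (fun j => μ j - ε * z j) i)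
    (hd : d = 2 * Real.sqrt (∑ i, (μ i - ε * z i) * S⁻¹.mulVec (fun j => μ j - ε * z j) i)) :
    c / d ^ 2 ≥ 1 / 2 ∧ (ε = 0 → c / d ^ 2 = 1 / 2) := by
  have hApd : (S⁻¹).PosDef := hS.inv
  set A := S⁻¹ with hAdef
  set v : Fin dd → ℝ := fun j => μ j - ε * z j with hv
  have hbridge : ∀ x y : Fin dd → ℝ, ∑ i, x i * (A *ᵥ y) i = dotProduct x (A *ᵥ y) :=
    fun _ _ => rfl
  have hsym : ∀ x y : Fin dd → ℝ, dotProduct x (A *ᵥ y) = dotProduct y (A *ᵥ x) := by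
    intro x y
    have hAt : Aᵀ = A := by
      have := hApd.1.eq
      simpa [Matrix.conjTranspose, Matrix.map, Matrix.transpose] using this
    rw [Matrix.dotProduct_mulVec, ← Matrix.mulVec_transpose, hAt, dotProduct_comm]
  have hQvv : 0 < dotProduct v (A *ᵥ v) := by
    have := hApd.dotProduct_mulVec_pos hne
    simpa using this
  have hQzz : 0 ≤ dotProduct z (A *ᵥ z) := by
    have := hApd.posSemidef.dotProduct_mulVec_nonneg z
    simpa using this
  -- expansion lemma
  have hexp : ∀ cc : ℝ, dotProduct (v + cc • z) (A *ᵥ (v + cc • z)) =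
      dotProduct v (A *ᵥ v) + 2 * cc * dotProduct z (A *ᵥ v)
        + cc ^ 2 * dotProduct z (A *ᵥ z) := by
    intro cc
    rw [Matrix.mulVec_add, Matrix.mulVec_smul, dotProduct_add, add_dotProduct,
      add_dotProduct, dotProduct_smul, smul_dotProduct,
      smul_dotProduct, dotProduct_smul, hsym v z]
    simp only [smul_eq_mul]
    ring
  -- key sign fact from optimality
  have key : 0 ≤ ε * dotProduct z (A *ᵥ v) := by
    set a : ℝ := ε * dotProduct z (A *ᵥ v) with ha
    set b : ℝ := ε ^ 2 * dotProduct z (A *ᵥ z) with hb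
    have hb0 : 0 ≤ b := by positivity
    have hineq : ∀ t : ℝ, 0 < t → t ≤ 1 → 0 ≤ 2 * t * a + t ^ 2 * b := by
      intro t ht ht1
      have hfe : ∀ i, |(1 - t) * z i| ≤ 1 := by
        intro i
        rw [abs_mul]
        calc |1 - t| * |z i| ≤ 1 * 1 := by
              apply mul_le_mul _ (hz i) (abs_nonneg _) zero_le_one
              rw [abs_le]; constructor <;> linarith
          _ = 1 := by ring
      have heq1 : (fun j => μ j - ε * ((1 - t) * z j)) = v + (t * ε) • z := by
        funext j
        simp only [hv, Pi.add_apply, Pi.smul_apply, smul_eq_mul]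
        ring
      have hm2 : dotProduct v (A *ᵥ v)
          ≤ dotProduct (v + (t * ε) • z) (A *ᵥ (v + (t * ε) • z)) := by
        calc dotProduct v (A *ᵥ v) = ∑ i, (μ i - ε * z i) * (A *ᵥ v) i := rfl
          _ ≤ ∑ i, (μ i - ε * ((1 - t) * z i)) * (A *ᵥ fun j => μ j - ε * ((1 - t) * z j)) i :=
              hmin (fun i => (1 - t) * z i) hfe
          _ = dotProduct (v + (t * ε) • z) (A *ᵥ (v + (t * ε) • z)) := by
              rw [← heq1]; rfl
      rw [hexp (t * ε)] at hm2
      have : 0 ≤ 2 * (t * ε) * dotProduct z (A *ᵥ v)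
          + (t * ε) ^ 2 * dotProduct z (A *ᵥ z) := by linarith
      rw [ha, hb]
      nlinarith [this]
    by_contra hcon
    push_neg at hcon
    rcases hb0.lt_or_eq with hbpos | hbz
    · have ht0 : 0 < min 1 (-a / b) := by
        apply lt_min one_pos
        apply div_pos (by linarith) hbpos
      have ht1 : min 1 (-a / b) ≤ 1 := min_le_left _ _
      have h2 := hineq _ ht0 ht1
      have htb : min 1 (-a / b) * b ≤ -a := by
        calc min 1 (-a / b) * b ≤ (-a / b) * b :=
              mul_le_mul_of_nonneg_right (min_le_right _ _) hbpos.le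
          _ = -a := by field_simp
      nlinarith [ht0, h2, htb]
    · have h2 := hineq 1 one_pos le_rfl
      rw [← hbz] at h2
      nlinarith
  -- compute c and d^2
  have hμeq : μ = v + ε • z := by
    funext j
    simp only [hv, Pi.add_apply, Pi.smul_apply, smul_eq_mul]
    ring
  have hcval : c = 2 * dotProduct v (A *ᵥ v) + 2 * (ε * dotProduct z (A *ᵥ v)) := by
    rw [hc, hbridge]
    rw [show dotProduct μ (A *ᵥ v) = dotProduct (v + ε • z) (A *ᵥ v) from by
      rw [← hμeq]]
    rw [add_dotProduct, smul_dotProduct]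
    simp only [smul_eq_mul]
    ring
  have hd2 : d ^ 2 = 4 * dotProduct v (A *ᵥ v) := by
    rw [hd, hbridge, mul_pow, Real.sq_sqrt hQvv.le]
    ring
  constructor
  · rw [ge_iff_le, hd2, le_div_iff₀ (by linarith), hcval]
    nlinarith [key, hQvv]
  · intro hε0
    rw [hcval, hd2, hε0]
    field_simp
    ring
end

section
/- Define F(π) = π·Φ((-c - ln(π/(1-π)))/d) for π ∈ (0,1) with c ∈ ℝ, d > 0, where Φ is the standard Gaussian CDF. Then lim_{π→1⁻} F'(π) = 0 and lim_{π→1⁻} d/dπ[F(1-π)] = -1; consequently the function R(π) = F(π) + F(1-π) satisfies lim_{π→1⁻} R'(π) = -1, so R is strictly decreasing on some interval (π*, 1). -/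
open Real Filter MeasureTheory Set Topology

noncomputable def Phi (x : ℝ) : ℝ :=
  ∫ t in Set.Iic x, (Real.sqrt (2 * Real.pi))⁻¹ * Real.exp (-t ^ 2 / 2)

namespace RiskAux

noncomputable def gauss (t : ℝ) : ℝ := (Real.sqrt (2 * Real.pi))⁻¹ * Real.exp (-t ^ 2 / 2)

lemma gauss_cont : Continuous gauss := by
  unfold gauss; continuity

lemma gauss_eq : gauss = fun t : ℝ => (Real.sqrt (2 * Real.pi))⁻¹ * Real.exp (-(1/2 : ℝ) * t ^ 2) := by
  funext t
  rw [gauss, show (-t ^ 2 / 2 : ℝ) = -(1/2 : ℝ) * t ^ 2 from by ring]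

lemma integrable_gauss : Integrable gauss := by
  rw [gauss_eq]
  exact (integrable_exp_neg_mul_sq (by norm_num : (0:ℝ) < 1/2)).const_mul _

lemma integral_gauss : ∫ t, gauss t = 1 := by
  rw [gauss_eq, MeasureTheory.integral_const_mul, integral_gaussian,
    show (Real.pi / (1/2) : ℝ) = 2 * Real.pi from by ring]
  exact inv_mul_cancel₀ (ne_of_gt (Real.sqrt_pos.mpr (by positivity)))

lemma hasDerivAt_Phi (x : ℝ) : HasDerivAt Phi (gauss x) x := by
  have key : ∀ y : ℝ, Phi y = Phi 0 + ∫ t in (0:ℝ)..y, gauss t := by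
    intro y
    have h := intervalIntegral.integral_Iic_sub_Iic (μ := volume) (f := gauss)
      integrable_gauss.integrableOn integrable_gauss.integrableOn (a := 0) (b := y)
    have e1 : Phi y = ∫ t in Set.Iic y, gauss t := rfl
    have e2 : Phi 0 = ∫ t in Set.Iic (0:ℝ), gauss t := rfl
    rw [e1, e2]; linarith
  have h2 : HasDerivAt (fun y : ℝ => Phi 0 + ∫ t in (0:ℝ)..y, gauss t) (gauss x) x :=
    (intervalIntegral.integral_hasDerivAt_right integrable_gauss.intervalIntegrable
      (gauss_cont.stronglyMeasurable.stronglyMeasurableAtFilter)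
      gauss_cont.continuousAt).const_add _
  have hfun : Phi = fun y : ℝ => Phi 0 + ∫ t in (0:ℝ)..y, gauss t := funext key
  rw [hfun]; exact h2

lemma Phi_atBot : Tendsto Phi atBot (𝓝 0) := by
  have h := intervalIntegral_tendsto_integral_Iic (μ := volume) (0:ℝ)
    integrable_gauss.integrableOn (tendsto_id : Tendsto (id : ℝ → ℝ) atBot atBot)
  have h2 : Tendsto (fun x : ℝ => Phi 0 - ∫ t in (id x : ℝ)..(0:ℝ), gauss t) atBot
      (𝓝 (Phi 0 - ∫ t in Set.Iic (0:ℝ), gauss t)) := tendsto_const_nhds.sub h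
  have e2 : Phi 0 = ∫ t in Set.Iic (0:ℝ), gauss t := rfl
  rw [← e2, sub_self] at h2
  refine h2.congr fun x => ?_
  have h := intervalIntegral.integral_Iic_sub_Iic (μ := volume) (f := gauss)
    integrable_gauss.integrableOn integrable_gauss.integrableOn (a := x) (b := 0)
  have e1 : Phi x = ∫ t in Set.Iic x, gauss t := rfl
  rw [e1]; simp only [id]; linarith

lemma Phi_atTop : Tendsto Phi atTop (𝓝 1) := by
  have hcov : AECover (volume : Measure ℝ) atTop (fun x : ℝ => Set.Iic x) :=
    aecover_Iic tendsto_id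
  have h := hcov.integral_tendsto_of_countably_generated integrable_gauss
  rw [integral_gauss] at h
  exact h

lemma gauss_atTop : Tendsto gauss atTop (𝓝 0) := by
  have h1 : Tendsto (fun t : ℝ => -t ^ 2 / 2) atTop atBot := by
    have := Tendsto.const_mul_atTop_of_neg (show (-(1/2) : ℝ) < 0 by norm_num)
      (tendsto_pow_atTop (two_ne_zero) : Tendsto (fun t : ℝ => t ^ 2) atTop atTop)
    refine this.congr fun t => by ring
  have h2 := (Real.tendsto_exp_atBot.comp h1).const_mul ((Real.sqrt (2 * Real.pi))⁻¹)
  rw [mul_zero] at h2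
  exact h2

lemma gauss_atBot : Tendsto gauss atBot (𝓝 0) := by
  have hsq : Tendsto (fun t : ℝ => t ^ 2) atBot atTop := by
    have := Tendsto.atBot_mul_atBot₀ (tendsto_id : Tendsto (id:ℝ→ℝ) atBot atBot) tendsto_id
    refine this.congr fun t => by simp only [id]; ring
  have h1 : Tendsto (fun t : ℝ => -t ^ 2 / 2) atBot atBot := by
    have := Tendsto.const_mul_atTop_of_neg (show (-(1/2) : ℝ) < 0 by norm_num) hsq
    refine this.congr fun t => by ring
  have h2 := (Real.tendsto_exp_atBot.comp h1).const_mul ((Real.sqrt (2 * Real.pi))⁻¹)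
  rw [mul_zero] at h2
  exact h2

lemma hasDerivAt_logit {p : ℝ} (h0 : 0 < p) (h1 : p < 1) :
    HasDerivAt (fun q : ℝ => Real.log (q / (1 - q))) (1 / (p * (1 - p))) p := by
  have h1' : (0:ℝ) < 1 - p := by linarith
  have hin : HasDerivAt (fun q : ℝ => 1 - q) (-1) p := by
    exact (hasDerivAt_id' p).const_sub (1:ℝ)
  have hB : HasDerivAt (fun q : ℝ => Real.log (1 - q)) ((1 - p)⁻¹ * (-1)) p :=
    (Real.hasDerivAt_log (ne_of_gt h1')).comp p hin
  have hd1 : HasDerivAt (fun q : ℝ => Real.log q - Real.log (1 - q))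
      (p⁻¹ - (1 - p)⁻¹ * (-1)) p := (Real.hasDerivAt_log (ne_of_gt h0)).sub hB
  have heq : (fun q : ℝ => Real.log (q / (1 - q))) =ᶠ[nhds p]
      fun q : ℝ => Real.log q - Real.log (1 - q) := by
    filter_upwards [Ioo_mem_nhds h0 h1] with q hq
    exact Real.log_div (ne_of_gt hq.1) (ne_of_gt (by linarith [hq.2] : (0:ℝ) < 1 - q))
  have := hd1.congr_of_eventuallyEq heq
  refine this.congr_deriv ?_
  have hp0 : p ≠ 0 := ne_of_gt h0
  have hp1 : 1 - p ≠ 0 := ne_of_gt h1'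
  field_simp
  ring

lemma hasDerivAt_F (c d : ℝ) (hd : 0 < d) {p : ℝ} (h0 : 0 < p) (h1 : p < 1) :
    HasDerivAt (fun q : ℝ => q * Phi ((-c - Real.log (q / (1 - q))) / d))
      (Phi ((-c - Real.log (p / (1 - p))) / d)
        - gauss ((-c - Real.log (p / (1 - p))) / d) / (d * (1 - p))) p := by
  have hL := hasDerivAt_logit h0 h1
  have hg : HasDerivAt (fun q : ℝ => (-c - Real.log (q / (1 - q))) / d)
      ((0 - 1 / (p * (1 - p))) / d) p := ((hasDerivAt_const p (-c)).sub hL).div_const d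
  have hPhi := (hasDerivAt_Phi ((-c - Real.log (p / (1 - p))) / d)).comp p hg
  have hmul := (hasDerivAt_id p).mul hPhi
  refine hmul.congr_deriv ?_
  have hp : p ≠ 0 := ne_of_gt h0
  have hp1 : (1:ℝ) - p ≠ 0 := ne_of_gt (by linarith)
  have hdd : d ≠ 0 := ne_of_gt hd
  simp only [id, Function.comp_apply]
  field_simp
  ring

end RiskAux

open RiskAux

theorem risk_eventually_decreasing (c d : ℝ) (hd : 0 < d)
    (F : ℝ → ℝ) (hF : F = fun p : ℝ => p * Phi ((-c - Real.log (p / (1 - p))) / d)) :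
    Filter.Tendsto (deriv F) (nhdsWithin 1 (Set.Iio 1)) (nhds 0) ∧
    Filter.Tendsto (deriv (fun p : ℝ => F (1 - p))) (nhdsWithin 1 (Set.Iio 1)) (nhds (-1)) ∧
    Filter.Tendsto (deriv (fun p : ℝ => F p + F (1 - p)))
      (nhdsWithin 1 (Set.Iio 1)) (nhds (-1)) ∧
    ∃ πs ∈ Set.Ioo (0 : ℝ) 1,
      StrictAntiOn (fun p : ℝ => F p + F (1 - p)) (Set.Ioo πs 1) := by
  subst hF
  have hmem : Set.Ioo (0:ℝ) 1 ∈ nhdsWithin (1:ℝ) (Set.Iio 1) :=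
    Ioo_mem_nhdsLT (by norm_num)
  -- logit tends to atTop
  have hlogit : Tendsto (fun p : ℝ => Real.log (p / (1 - p)))
      (nhdsWithin (1:ℝ) (Set.Iio 1)) atTop := by
    have h1 : Tendsto (fun p : ℝ => 1 - p) (nhdsWithin (1:ℝ) (Set.Iio 1))
        (nhdsWithin (0:ℝ) (Set.Ioi 0)) := by
      apply tendsto_nhdsWithin_of_tendsto_nhds_of_eventually_within
      · have hc : Continuous (fun p : ℝ => 1 - p) := by continuity
        simpa using (hc.tendsto 1).mono_left nhdsWithin_le_nhds
      · filter_upwards [self_mem_nhdsWithin] with p hp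
        exact sub_pos.mpr (Set.mem_Iio.mp hp)
    have h2 : Tendsto (fun p : ℝ => (1 - p)⁻¹) (nhdsWithin (1:ℝ) (Set.Iio 1)) atTop :=
      tendsto_inv_nhdsGT_zero.comp h1
    have h3 : Tendsto (fun p : ℝ => p) (nhdsWithin (1:ℝ) (Set.Iio 1)) (nhds 1) :=
      (continuous_id.tendsto 1).mono_left nhdsWithin_le_nhds
    have h4 : Tendsto (fun p : ℝ => p * (1 - p)⁻¹) (nhdsWithin (1:ℝ) (Set.Iio 1)) atTop :=
      h3.pos_mul_atTop one_pos h2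
    have h5 := Real.tendsto_log_atTop.comp h4
    refine h5.congr fun p => ?_
    simp [Function.comp, div_eq_mul_inv]
  -- linear maps to atBot / atTop
  have hlinBot : Tendsto (fun u : ℝ => (-c - u) / d) atTop atBot := by
    apply Tendsto.atBot_div_const hd
    have := tendsto_neg_atTop_atBot.comp (tendsto_atTop_add_const_right atTop c tendsto_id)
    refine this.congr fun u => ?_
    simp [Function.comp]; ring
  have hlinTop : Tendsto (fun u : ℝ => (-c + u) / d) atTop atTop :=
    Tendsto.atTop_div_const hd (tendsto_atTop_add_const_left atTop (-c) tendsto_id)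
  -- limit of first derivative expression
  have hA : Tendsto (fun u : ℝ => Phi ((-c - u) / d)) atTop (nhds 0) := Phi_atBot.comp hlinBot
  have hGB : Tendsto (fun u : ℝ => gauss ((-c - u) / d)) atTop (nhds 0) := gauss_atBot.comp hlinBot
  have hGT : Tendsto (fun u : ℝ => gauss ((-c + u) / d)) atTop (nhds 0) := gauss_atTop.comp hlinTop
  have hE : Tendsto (fun u : ℝ => Real.exp u * gauss ((-c - u) / d)) atTop (nhds 0) := by
    have e : ∀ u : ℝ, Real.exp u * gauss ((-c - u) / d) =
        (Real.sqrt (2 * Real.pi))⁻¹ *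
          Real.exp (-(1 / (2 * d ^ 2)) * (u + (c - d ^ 2)) ^ 2 + ((c - d ^ 2) ^ 2 - c ^ 2) / (2 * d ^ 2)) := by
      intro u
      have hdd : d ≠ 0 := ne_of_gt hd
      rw [gauss, mul_comm (Real.exp u), mul_assoc, ← Real.exp_add]
      congr 1
      field_simp
      ring
    have hquad : Tendsto (fun u : ℝ =>
        -(1 / (2 * d ^ 2)) * (u + (c - d ^ 2)) ^ 2 + ((c - d ^ 2) ^ 2 - c ^ 2) / (2 * d ^ 2))
        atTop atBot := by
      apply tendsto_atBot_add_const_right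
      have hneg : -(1 / (2 * d ^ 2)) < 0 := by
        have : (0:ℝ) < 1 / (2 * d ^ 2) := by positivity
        linarith
      exact Tendsto.const_mul_atTop_of_neg hneg
        ((tendsto_pow_atTop two_ne_zero).comp (tendsto_atTop_add_const_right atTop _ tendsto_id))
    have h2 := (Real.tendsto_exp_atBot.comp hquad).const_mul ((Real.sqrt (2 * Real.pi))⁻¹)
    rw [mul_zero] at h2
    exact h2.congr fun u => (e u).symm
  have hB : Tendsto (fun u : ℝ => (1 + Real.exp u) / d * gauss ((-c - u) / d)) atTop (nhds 0) := by
    have h2 := (hGB.add hE).const_mul (1 / d)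
    rw [add_zero, mul_zero] at h2
    exact h2.congr fun u => by ring
  have hH1 : Tendsto (fun u : ℝ =>
      Phi ((-c - u) / d) - (1 + Real.exp u) / d * gauss ((-c - u) / d)) atTop (nhds 0) := by
    have := hA.sub hB
    rwa [sub_zero] at this
  -- limit of second derivative expression
  have hH2 : Tendsto (fun u : ℝ =>
      -(Phi ((-c + u) / d) - (1 + Real.exp (-u)) / d * gauss ((-c + u) / d))) atTop (nhds (-1)) := by
    have hPhiT : Tendsto (fun u : ℝ => Phi ((-c + u) / d)) atTop (nhds 1) := Phi_atTop.comp hlinTop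
    have hexp : Tendsto (fun u : ℝ => Real.exp (-u)) atTop (nhds 0) :=
      Real.tendsto_exp_atBot.comp tendsto_neg_atTop_atBot
    have hcoef : Tendsto (fun u : ℝ => (1 + Real.exp (-u)) / d) atTop (nhds ((1 + 0) / d)) :=
      (tendsto_const_nhds.add hexp).div_const d
    have hprod := hcoef.mul hGT
    rw [mul_zero] at hprod
    have := (hPhiT.sub hprod).neg
    rwa [sub_zero, show (-(1:ℝ)) = -1 from rfl] at this
  -- eventual identification of deriv F
  have hev1 : (fun p : ℝ => (fun u : ℝ =>
      Phi ((-c - u) / d) - (1 + Real.exp u) / d * gauss ((-c - u) / d)) (Real.log (p / (1 - p))))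
      =ᶠ[nhdsWithin (1:ℝ) (Set.Iio 1)]
      deriv (fun p : ℝ => p * Phi ((-c - Real.log (p / (1 - p))) / d)) := by
    filter_upwards [hmem] with p hp
    obtain ⟨h0, h1⟩ := hp
    have h1p : (0:ℝ) < 1 - p := by linarith
    rw [(hasDerivAt_F c d hd h0 h1).deriv]
    have hexp : Real.exp (Real.log (p / (1 - p))) = p / (1 - p) :=
      Real.exp_log (div_pos h0 h1p)
    have hco : ((1 + p / (1 - p)) / d : ℝ) = 1 / (d * (1 - p)) := by
      rw [div_eq_div_iff (ne_of_gt hd) (by positivity)]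
      field_simp
      ring
    rw [hexp, hco, one_div, ← div_eq_inv_mul]
  have goal1 : Tendsto (deriv (fun p : ℝ => p * Phi ((-c - Real.log (p / (1 - p))) / d)))
      (nhdsWithin (1:ℝ) (Set.Iio 1)) (nhds 0) := (hH1.comp hlogit).congr' hev1
  -- derivative of reflected F
  have hDG : ∀ p : ℝ, 0 < p → p < 1 →
      HasDerivAt (fun q : ℝ => (1 - q) * Phi ((-c - Real.log ((1 - q) / (1 - (1 - q)))) / d))
        ((Phi ((-c - Real.log ((1 - p) / (1 - (1 - p)))) / d)
          - gauss ((-c - Real.log ((1 - p) / (1 - (1 - p)))) / d) / (d * (1 - (1 - p)))) * (-1)) p := by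
    intro p h0 h1
    have hin : HasDerivAt (fun q : ℝ => 1 - q) (-1) p := by
      exact (hasDerivAt_id' p).const_sub (1:ℝ)
    exact (hasDerivAt_F c d hd (by linarith : (0:ℝ) < 1 - p) (by linarith : (1:ℝ) - p < 1)).comp p hin
  have hev2 : (fun p : ℝ => (fun u : ℝ =>
      -(Phi ((-c + u) / d) - (1 + Real.exp (-u)) / d * gauss ((-c + u) / d))) (Real.log (p / (1 - p))))
      =ᶠ[nhdsWithin (1:ℝ) (Set.Iio 1)]
      deriv (fun p : ℝ => (1 - p) * Phi ((-c - Real.log ((1 - p) / (1 - (1 - p)))) / d)) := by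
    filter_upwards [hmem] with p hp
    obtain ⟨h0, h1⟩ := hp
    have h1p : (0:ℝ) < 1 - p := by linarith
    rw [(hDG p h0 h1).deriv]
    have hlogeq : Real.log ((1 - p) / (1 - (1 - p))) = -Real.log (p / (1 - p)) := by
      rw [show (1 - (1 - p) : ℝ) = p from by ring, ← Real.log_inv, inv_div]
    have hexp : Real.exp (-Real.log (p / (1 - p))) = (1 - p) / p := by
      rw [← hlogeq, show (1 - (1 - p) : ℝ) = p from by ring]
      exact Real.exp_log (div_pos h1p h0)
    rw [hlogeq, hexp, show (1 - (1 - p) : ℝ) = p from by ring,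
      show (-c - -Real.log (p / (1 - p))) / d = (-c + Real.log (p / (1 - p))) / d from by ring_nf]
    have hco : ((1 + (1 - p) / p) / d : ℝ) = 1 / (d * p) := by
      rw [div_eq_div_iff (ne_of_gt hd) (by positivity)]
      field_simp
      ring
    rw [hco, one_div, ← div_eq_inv_mul]
    ring
  have goal2 : Tendsto (deriv (fun p : ℝ =>
      (1 - p) * Phi ((-c - Real.log ((1 - p) / (1 - (1 - p)))) / d)))
      (nhdsWithin (1:ℝ) (Set.Iio 1)) (nhds (-1)) := (hH2.comp hlogit).congr' hev2
  -- combined derivative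
  have hevsum : (fun p : ℝ =>
      ((fun u : ℝ => Phi ((-c - u) / d) - (1 + Real.exp u) / d * gauss ((-c - u) / d)) (Real.log (p / (1 - p)))
        + (fun u : ℝ => -(Phi ((-c + u) / d) - (1 + Real.exp (-u)) / d * gauss ((-c + u) / d))) (Real.log (p / (1 - p)))))
      =ᶠ[nhdsWithin (1:ℝ) (Set.Iio 1)]
      deriv (fun p : ℝ => p * Phi ((-c - Real.log (p / (1 - p))) / d)
        + (1 - p) * Phi ((-c - Real.log ((1 - p) / (1 - (1 - p)))) / d)) := by
    filter_upwards [hmem, hev1, hev2] with p hp he1 he2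
    obtain ⟨h0, h1⟩ := hp
    have hsum := ((hasDerivAt_F c d hd h0 h1).fun_add (hDG p h0 h1)).deriv
    rw [hsum, ← (hasDerivAt_F c d hd h0 h1).deriv, ← (hDG p h0 h1).deriv, ← he1, ← he2]
  have goal3 : Tendsto (deriv (fun p : ℝ => p * Phi ((-c - Real.log (p / (1 - p))) / d)
      + (1 - p) * Phi ((-c - Real.log ((1 - p) / (1 - (1 - p)))) / d)))
      (nhdsWithin (1:ℝ) (Set.Iio 1)) (nhds (-1)) := by
    have := ((hH1.add hH2).comp hlogit).congr' hevsum
    rwa [zero_add] at this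
  refine ⟨goal1, goal2, goal3, ?_⟩
  -- strict antitonicity near 1
  have hneg : ∀ᶠ p in nhdsWithin (1:ℝ) (Set.Iio 1),
      deriv (fun p : ℝ => p * Phi ((-c - Real.log (p / (1 - p))) / d)
        + (1 - p) * Phi ((-c - Real.log ((1 - p) / (1 - (1 - p)))) / d)) p < 0 :=
    goal3.eventually_lt_const (by norm_num)
  rw [eventually_iff] at hneg
  rw [mem_nhdsLT_iff_exists_Ioo_subset] at hneg
  obtain ⟨a, ha, hsub⟩ := hneg
  refine ⟨max a (1/2), ⟨lt_of_lt_of_le (by norm_num) (le_max_right a (1/2)),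
    max_lt ha (by norm_num)⟩, ?_⟩
  have hsubset : Set.Ioo (max a (1/2)) 1 ⊆ Set.Ioo (0:ℝ) 1 := fun p hp =>
    ⟨lt_of_lt_of_le (by norm_num : (0:ℝ) < 1/2) ((le_max_right a (1/2)).trans hp.1.le), hp.2⟩
  apply strictAntiOn_of_deriv_neg (convex_Ioo _ _)
  · intro p hp
    obtain ⟨h0, h1⟩ := hsubset hp
    exact ((hasDerivAt_F c d hd h0 h1).add (hDG p h0 h1)).continuousAt.continuousWithinAt
  · intro p hp
    rw [interior_Ioo] at hp
    exact hsub ⟨lt_of_le_of_lt (le_max_left a (1/2)) hp.1, hp.2⟩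
end

section
/- Let Σ be a symmetric positive definite d×d matrix and μ ∈ ℝ^d with m := √⟨μ, Σ^{-1}μ⟩ > 0. Let C = C_{Σ,μ} := ⟨sign(Σ^{-1}μ), Σ^{-1}sign(Σ^{-1}μ)⟩ - ‖Σ^{-1}μ‖_1²/m². Suppose 0 ≤ ε ≤ min(m²/(2‖Σ^{-1}μ‖_1), m/(2√C)) (with the second constraint vacuous if C = 0). Let z* minimize ‖μ - εz‖_{Σ^{-1}} over ‖z‖_∞ ≤ 1. Then the gap G := Φ((-m² + ε⟨z*, Σ^{-1}μ⟩)/‖μ - εz*‖_{Σ^{-1}}) - Φ(-m) satisfies G ≤ Φ(-m + 2Cε²/m) - Φ(-m) ≤ (2e^{-m²/8}·C·ε²)/(√(2π)·m). -/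
open MeasureTheory Real Set Matrix

lemma gauss_int : Integrable (fun t : ℝ => (Real.sqrt (2 * Real.pi))⁻¹ * Real.exp (-t ^ 2 / 2)) := by
  have : ∀ t : ℝ, -t^2/2 = -(1/2:ℝ)*t^2 := by intro t; ring
  simp only [this]
  exact (integrable_exp_neg_mul_sq (by norm_num)).const_mul _

lemma Phi_sub (a b : ℝ) (hab : a ≤ b) :
    Phi b - Phi a = ∫ t in Set.Ioc a b, (Real.sqrt (2 * Real.pi))⁻¹ * Real.exp (-t ^ 2 / 2) := by
  rw [Phi, Phi, intervalIntegral.integral_Iic_sub_Iic gauss_int.integrableOn gauss_int.integrableOn,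
    intervalIntegral.integral_of_le hab]

lemma Phi_mono {a b : ℝ} (hab : a ≤ b) : Phi a ≤ Phi b := by
  have h := Phi_sub a b hab
  have : 0 ≤ ∫ t in Set.Ioc a b, (Real.sqrt (2 * Real.pi))⁻¹ * Real.exp (-t ^ 2 / 2) := by
    apply setIntegral_nonneg measurableSet_Ioc
    intro t _
    positivity
  linarith

lemma Phi_diff_le {a b K : ℝ} (hab : a ≤ b) (hK : ∀ t ∈ Set.Icc a b, Real.exp (-t^2/2) ≤ K) :
    Phi b - Phi a ≤ (b - a) * ((Real.sqrt (2 * Real.pi))⁻¹ * K) := by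
  rw [Phi_sub a b hab]
  have h1 : (∫ t in Set.Ioc a b, (Real.sqrt (2 * Real.pi))⁻¹ * Real.exp (-t ^ 2 / 2))
      ≤ ∫ _t in Set.Ioc a b, (Real.sqrt (2 * Real.pi))⁻¹ * K := by
    apply setIntegral_mono_on gauss_int.integrableOn
      (integrableOn_const measure_Ioc_lt_top.ne) measurableSet_Ioc
    intro t ht
    exact mul_le_mul_of_nonneg_left (hK t ⟨le_of_lt ht.1, ht.2⟩) (by positivity)
  have h2 : (∫ _t in Set.Ioc a b, (Real.sqrt (2 * Real.pi))⁻¹ * K)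
      = (b - a) * ((Real.sqrt (2 * Real.pi))⁻¹ * K) := by
    rw [setIntegral_const, Real.volume_real_Ioc_of_le hab, smul_eq_mul]
  linarith

lemma dot_symm {d : ℕ} {M : Matrix (Fin d) (Fin d) ℝ} (hM : M.IsHermitian) (x y : Fin d → ℝ) :
    x ⬝ᵥ M *ᵥ y = y ⬝ᵥ M *ᵥ x := by
  have hsym : Mᵀ = M := by rw [← Matrix.conjTranspose_eq_transpose_of_trivial]; exact hM
  rw [dotProduct_mulVec]
  rw [show x ᵥ* M = M *ᵥ x by rw [← hsym, Matrix.mulVec_transpose, hsym]]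
  exact dotProduct_comm _ _

lemma psd_nonneg {d : ℕ} {M : Matrix (Fin d) (Fin d) ℝ} (hM : M.PosSemidef) (x : Fin d → ℝ) :
    0 ≤ x ⬝ᵥ M *ᵥ x := by
  simpa using hM.dotProduct_mulVec_nonneg x

lemma cs_ineq {d : ℕ} {M : Matrix (Fin d) (Fin d) ℝ} (hM : M.PosSemidef) (x y : Fin d → ℝ) :
    (x ⬝ᵥ M *ᵥ y)^2 ≤ (x ⬝ᵥ M *ᵥ x) * (y ⬝ᵥ M *ᵥ y) := by
  have hq : ∀ t : ℝ, 0 ≤ (y ⬝ᵥ M *ᵥ y) * (t * t) + (2 * (x ⬝ᵥ M *ᵥ y)) * t + (x ⬝ᵥ M *ᵥ x) := by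
    intro t
    have h0 := psd_nonneg hM (x + t • y)
    have hxy := dot_symm hM.1 y x
    simp only [add_dotProduct, smul_dotProduct, Matrix.mulVec_add,
      Matrix.mulVec_smul, dotProduct_add, dotProduct_smul, smul_eq_mul] at h0
    rw [hxy] at h0
    nlinarith [h0]
  have := discrim_le_zero hq
  unfold discrim at this
  nlinarith [this]

lemma key_poly (m p q : ℝ) (hm : 0 < m) (hp0 : 0 ≤ p) (hp : p ≤ m^2/2)
    (hq0 : 0 ≤ q) (hq : q ≤ m^2/4) :
    (m - 2*q/m)^2 * ((m^2 - p)^2/m^2 + q) ≤ (m^2 - p)^2 := by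
  have hm0 : m ≠ 0 := ne_of_gt hm
  have hm2 : (0:ℝ) < m^2 := by positivity
  have e1 : m - 2*q/m = (m^2 - 2*q)/m := by field_simp
  have e2 : (m^2-p)^2/m^2 + q = ((m^2-p)^2 + q*m^2)/m^2 := by field_simp
  rw [e1, e2, div_pow, div_mul_div_comm]
  rw [div_le_iff₀ (by positivity)]
  have h1 : m^4/4 ≤ (m^2-p)^2 := by nlinarith
  have h2 : 0 ≤ m^2 - q := by nlinarith
  have h3 : 0 ≤ 3*m^2 - 4*q := by nlinarith
  nlinarith [mul_nonneg (mul_nonneg hq0 h2) (sub_nonneg.2 h1),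
    mul_nonneg (mul_nonneg (mul_nonneg hq0 h3) hm2.le) hm2.le]

lemma rsign_mul_self (x : ℝ) : Real.sign x * x = |x| := by
  rcases lt_trichotomy x 0 with h | h | h
  · rw [Real.sign_of_neg h, abs_of_neg h]; ring
  · simp [h]
  · rw [Real.sign_of_pos h, abs_of_pos h]; ring

lemma rabs_sign_le_one (x : ℝ) : |Real.sign x| ≤ 1 := by
  rcases lt_trichotomy x 0 with h | h | h
  · rw [Real.sign_of_neg h]; norm_num
  · simp [h]
  · rw [Real.sign_of_pos h]; norm_num

set_option maxHeartbeats 1000000 in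
theorem gap_upper_bound (d : ℕ) (S : Matrix (Fin d) (Fin d) ℝ) (hS : S.PosDef)
    (μ : Fin d → ℝ) (m C ε : ℝ)
    (hm : m = Real.sqrt (∑ i, μ i * S⁻¹.mulVec μ i)) (hm0 : 0 < m)
    (hC : C = (∑ i, Real.sign (S⁻¹.mulVec μ i)
          * S⁻¹.mulVec (fun j => Real.sign (S⁻¹.mulVec μ j)) i)
        - (∑ i, |S⁻¹.mulVec μ i|) ^ 2 / m ^ 2)
    (hε0 : 0 ≤ ε) (hε1 : ε ≤ m ^ 2 / (2 * ∑ i, |S⁻¹.mulVec μ i|))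
    (hε2 : C ≠ 0 → ε ≤ m / (2 * Real.sqrt C))
    (z : Fin d → ℝ) (hz : ∀ i, |z i| ≤ 1)
    (hmin : ∀ z' : Fin d → ℝ, (∀ i, |z' i| ≤ 1) →
        ∑ i, (μ i - ε * z i) * S⁻¹.mulVec (fun j => μ j - ε * z j) i
          ≤ ∑ i, (μ i - ε * z' i) * S⁻¹.mulVec (fun j => μ j - ε * z' j) i)
    (G : ℝ)
    (hG : G = Phi ((-m ^ 2 + ε * ∑ i, z i * S⁻¹.mulVec μ i)
          / Real.sqrt (∑ i, (μ i - ε * z i) * S⁻¹.mulVec (fun j => μ j - ε * z j) i))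
        - Phi (-m)) :
    G ≤ Phi (-m + 2 * C * ε ^ 2 / m) - Phi (-m) ∧
    Phi (-m + 2 * C * ε ^ 2 / m) - Phi (-m)
      ≤ 2 * Real.exp (-m ^ 2 / 8) * C * ε ^ 2 / (Real.sqrt (2 * Real.pi) * m) := by
  have hMpd : (S⁻¹).PosDef := hS.inv
  have hMpsd := hMpd.posSemidef
  have hherm : (S⁻¹).IsHermitian := hMpd.1
  set M := S⁻¹ with hMdef
  set w : Fin d → ℝ := M *ᵥ μ with hw
  set L : ℝ := ∑ i, |w i| with hLdef
  set s : Fin d → ℝ := fun i => Real.sign (w i) with hsdef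
  set Q : ℝ := s ⬝ᵥ M *ᵥ s with hQdef
  set v : Fin d → ℝ := fun i => μ i - ε * z i with hvdef
  set f : ℝ := v ⬝ᵥ M *ᵥ v with hfdef
  -- m^2 identity
  have hm2nn : 0 ≤ μ ⬝ᵥ M *ᵥ μ := psd_nonneg hMpsd μ
  have hm2 : m^2 = μ ⬝ᵥ M *ᵥ μ := by
    rw [hm]
    exact Real.sq_sqrt hm2nn
  have hm2pos : (0:ℝ) < m^2 := by positivity
  -- L > 0
  have hLnn : 0 ≤ L := Finset.sum_nonneg fun i _ => abs_nonneg _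
  have hL0 : 0 < L := by
    rcases hLnn.lt_or_eq with h | h
    · exact h
    · exfalso
      have hall : ∀ i, w i = 0 := by
        intro i
        have := (Finset.sum_eq_zero_iff_of_nonneg (fun i _ => abs_nonneg (w i))).1 h.symm i
          (Finset.mem_univ i)
        exact abs_eq_zero.1 this
      have : μ ⬝ᵥ M *ᵥ μ = 0 := by
        rw [dotProduct]
        exact Finset.sum_eq_zero fun i _ => by rw [show (M *ᵥ μ) i = w i from rfl, hall i, mul_zero]
      rw [← hm2] at this
      nlinarith
  -- ε L ≤ m^2/2
  have hεL : ε * L ≤ m^2/2 := by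
    have h := (le_div_iff₀ (by positivity : (0:ℝ) < 2 * L)).1 hε1
    nlinarith
  -- s dot w = L
  have hsw : s ⬝ᵥ w = L := by
    rw [dotProduct, hLdef]
    exact Finset.sum_congr rfl fun i _ => rsign_mul_self (w i)
  -- z dot w ≤ L
  have hzw : z ⬝ᵥ w ≤ L := by
    rw [dotProduct, hLdef]
    apply Finset.sum_le_sum
    intro i _
    calc z i * w i ≤ |z i * w i| := le_abs_self _
    _ = |z i| * |w i| := abs_mul _ _
    _ ≤ 1 * |w i| := mul_le_mul_of_nonneg_right (hz i) (abs_nonneg _)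
    _ = |w i| := one_mul _
  -- C ≥ 0
  have hCQ : C = Q - L^2/m^2 := hC
  have hC0 : 0 ≤ C := by
    have hcs := cs_ineq hMpsd s μ
    rw [show s ⬝ᵥ M *ᵥ μ = s ⬝ᵥ w from rfl, hsw, ← hQdef, ← hm2] at hcs
    rw [hCQ, sub_nonneg, div_le_iff₀ hm2pos]
    linarith
  -- ε^2 C ≤ m^2/4
  have hεC : ε^2 * C ≤ m^2/4 := by
    rcases eq_or_ne C 0 with h | h
    · rw [h]; nlinarith
    · have hCpos : 0 < C := hC0.lt_of_ne (Ne.symm h)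
      have hsC : 0 < Real.sqrt C := Real.sqrt_pos.2 hCpos
      have h2 := hε2 h
      have h3 : ε^2 ≤ (m / (2 * Real.sqrt C))^2 := pow_le_pow_left₀ hε0 h2 2
      have h4 : (m / (2 * Real.sqrt C))^2 = m^2 / (4 * C) := by
        rw [div_pow, mul_pow, Real.sq_sqrt hC0]
        norm_num
      rw [h4] at h3
      have h5 : ε^2 * C ≤ (m^2/(4*C)) * C := mul_le_mul_of_nonneg_right h3 hCpos.le
      have h6 : (m^2/(4*C))*C = m^2/4 := by field_simp
      linarith
  -- feasibility of s and minimality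
  have hsz : ∀ i, |s i| ≤ 1 := fun i => rabs_sign_le_one (w i)
  have hmin_s := hmin s hsz
  have hrhs : ∑ i, (μ i - ε * s i) * (M *ᵥ (fun j => μ j - ε * s j)) i
      = m^2 - 2*(ε*L) + ε^2*Q := by
    have he : (fun j => μ j - ε * s j) = μ - ε • s := by
      funext j; simp
    have e0 : ∑ i, (μ i - ε * s i) * (M *ᵥ (fun j => μ j - ε * s j)) i
        = (μ - ε • s) ⬝ᵥ M *ᵥ (μ - ε • s) := by rw [← he]; rfl
    rw [e0]
    have hsym := dot_symm hherm μ s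
    simp only [Matrix.mulVec_sub, Matrix.mulVec_smul, sub_dotProduct,
      dotProduct_sub, smul_dotProduct, dotProduct_smul, smul_eq_mul]
    rw [hsym]
    rw [show s ⬝ᵥ M *ᵥ μ = s ⬝ᵥ w from rfl, hsw, ← hm2, ← hQdef]
    ring
  have hfle : f ≤ m^2 - 2*(ε*L) + ε^2*Q := by
    rw [hrhs] at hmin_s
    exact hmin_s
  -- numerator identity and f lower bound
  have hMv : μ ⬝ᵥ M *ᵥ v = m^2 - ε * (z ⬝ᵥ w) := by
    have he : v = μ - ε • z := by funext j; simp [hvdef]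
    rw [he]
    have hsym := dot_symm hherm μ z
    simp only [Matrix.mulVec_sub, Matrix.mulVec_smul, dotProduct_sub,
      dotProduct_smul, smul_eq_mul]
    rw [hsym, show z ⬝ᵥ M *ᵥ μ = z ⬝ᵥ w from rfl, ← hm2]
  have hzwε : ε * (z ⬝ᵥ w) ≤ ε * L := mul_le_mul_of_nonneg_left hzw hε0
  have hεLnn : 0 ≤ ε * L := mul_nonneg hε0 hLnn
  have hNge : m^2/2 ≤ m^2 - ε * (z ⬝ᵥ w) := by linarith
  have hcsf : (m^2 - ε * (z ⬝ᵥ w))^2 ≤ m^2 * f := by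
    have h := cs_ineq hMpsd μ v
    rw [hMv, ← hm2] at h
    exact h
  have hG' : G = Phi ((-m^2 + ε * (z ⬝ᵥ w)) / Real.sqrt f) - Phi (-m) := hG
  set N : ℝ := z ⬝ᵥ w with hN
  clear_value M w s Q v f N L
  clear hG hmin hε1 hε2 hC hm hz hsz hmin_s hrhs hMv hMdef hw hsdef hQdef hvdef hfdef hLdef hN hsw hzw hm2 hm2nn hherm hMpsd hMpd hS S
  have hfpos : 0 < f := by nlinarith
  set fs : ℝ := m^2 - 2*(ε*L) + ε^2*Q with hfsdef
  have hfspos : 0 < fs := lt_of_lt_of_le hfpos hfle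
  have hfs_eq : fs = (m^2 - ε*L)^2/m^2 + ε^2*C := by
    rw [hfsdef, hCQ]
    field_simp
    ring
  set B : ℝ := m - 2*C*ε^2/m with hBdef
  clear_value fs B
  have hB2 : B = m - 2*(ε^2*C)/m := by rw [hBdef]; ring
  have hBge : m/2 ≤ B := by
    rw [hB2]
    have : 2*(ε^2*C)/m ≤ m/2 := by
      rw [div_le_div_iff₀ hm0 (by norm_num : (0:ℝ) < 2)]
      nlinarith
    linarith
  have hBpos : 0 < B := lt_of_lt_of_le (by positivity) hBge
  have hεCnn : 0 ≤ ε^2*C := mul_nonneg (sq_nonneg ε) hC0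
  have hkey : B * Real.sqrt fs ≤ m^2 - ε*L := by
    have hpoly : B^2 * fs ≤ (m^2 - ε*L)^2 := by
      rw [hB2, hfs_eq]
      exact key_poly m (ε*L) (ε^2*C) hm0 hεLnn hεL hεCnn hεC
    calc B * Real.sqrt fs = Real.sqrt (B^2 * fs) := by
          rw [Real.sqrt_mul (sq_nonneg B), Real.sqrt_sq hBpos.le]
      _ ≤ Real.sqrt ((m^2 - ε*L)^2) := Real.sqrt_le_sqrt hpoly
      _ = m^2 - ε*L := Real.sqrt_sq (by nlinarith)
  have hsf : 0 < Real.sqrt f := Real.sqrt_pos.2 hfpos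
  have hsfs : 0 < Real.sqrt fs := Real.sqrt_pos.2 hfspos
  have hsffs : Real.sqrt f ≤ Real.sqrt fs := Real.sqrt_le_sqrt hfle
  have hPnn : (0:ℝ) ≤ m^2 - ε*L := by nlinarith
  have harg : (-m^2 + ε * N) / Real.sqrt f ≤ -m + 2*C*ε^2/m := by
    have s1 : (-m^2 + ε * N) / Real.sqrt f ≤ (-(m^2 - ε*L)) / Real.sqrt f :=
      (div_le_div_iff_of_pos_right hsf).2 (by linarith)
    have s2' : (m^2 - ε*L) / Real.sqrt fs ≤ (m^2 - ε*L) / Real.sqrt f :=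
      div_le_div_of_nonneg_left hPnn hsf hsffs
    have s2 : (-(m^2 - ε*L)) / Real.sqrt f ≤ (-(m^2 - ε*L)) / Real.sqrt fs := by
      rw [neg_div, neg_div]
      linarith
    have s3 : (-(m^2 - ε*L)) / Real.sqrt fs ≤ -B := by
      rw [div_le_iff₀ hsfs]
      nlinarith [hkey]
    have : -B = -m + 2*C*ε^2/m := by rw [hBdef]; ring
    linarith
  have hδ0 : 0 ≤ 2*C*ε^2/m := by positivity
  have hδm : 2*C*ε^2/m ≤ m/2 := by
    rw [div_le_div_iff₀ hm0 (by norm_num : (0:ℝ) < 2)]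
    nlinarith
  constructor
  · rw [hG']
    apply sub_le_sub_right
    apply Phi_mono
    calc (-m ^ 2 + ε * N) / √f ≤ -m + 2*C*ε^2/m := harg
      _ = -m + 2 * C * ε ^ 2 / m := by ring
  · have hab : -m ≤ -m + 2 * C * ε ^ 2 / m := by
      have : -m + 0 ≤ -m + 2*C*ε^2/m := by linarith
      linarith
    have hK : ∀ t ∈ Set.Icc (-m) (-m + 2 * C * ε ^ 2 / m),
        Real.exp (-t^2/2) ≤ Real.exp (-m^2/8) := by
      intro t ht
      rw [Real.exp_le_exp]
      have h1 : t ≤ -m/2 := by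
        have := ht.2
        linarith
      nlinarith
    have h := Phi_diff_le hab hK
    have he : ((-m + 2 * C * ε ^ 2 / m) - (-m)) * ((Real.sqrt (2 * Real.pi))⁻¹ * Real.exp (-m^2/8))
        = 2 * Real.exp (-m ^ 2 / 8) * C * ε ^ 2 / (Real.sqrt (2 * Real.pi) * m) := by
      have hπ : (0:ℝ) < Real.sqrt (2 * Real.pi) := Real.sqrt_pos.2 (by positivity)
      field_simp
      ring
    rw [he] at h
    exact h
end
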